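/- Let φ ∈ L^∞(𝕋ⁿ). The following are equivalent: (i) φ is an analytic symbol for △ₙ (so T_{φ,△ₙ} is an analytic Toeplitz operator); (ii) T_{φ,△ₙ} commutes with 𝓜_{z_j} for every j = 1,…,n; (iii) the range of 𝓜_{z_j} is invariant under T_{φ,△ₙ} for every j = 1,…,n. -/

import Mathlib

open MeasureTheory Filter Topology ComplexConjugate

noncomputable section

instance fact_one_pos : Fact ((0:ℝ) < 1) := ⟨one_pos⟩

abbrev Torus (n : ℕ) := Fin n → AddCircle (1 : ℝ)

abbrev L2T (n : ℕ) := Lp ℂ 2 (volume : Measure (Torus n))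

abbrev LinfT (n : ℕ) := Lp ℂ ⊤ (volume : Measure (Torus n))

def char {n : ℕ} (α : Fin n → ℤ) : Torus n → ℂ := fun x => ∏ j, fourier (α j) (x j)

lemma char_continuous {n : ℕ} (α : Fin n → ℤ) : Continuous (char α) :=
  continuous_finsetProd _ fun j _ => (fourier (α j)).continuous.comp (continuous_apply j)

lemma char_memLp {n : ℕ} (α : Fin n → ℤ) (p : ENNReal) :
    MemLp (char α) p (volume : Measure (Torus n)) := by
  refine (memLp_top_of_bound ((char_continuous α).aestronglyMeasurable) 1 ?_).mono_exponent le_top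
  filter_upwards with x
  simp only [char, norm_prod]
  calc ∏ j, ‖fourier (α j) (x j)‖
      = ∏ j : Fin n, (1:ℝ) := by
        refine Finset.prod_congr rfl fun j _ => ?_
        rw [fourier_apply]; exact Circle.norm_coe _
    _ ≤ 1 := by simp

def charL2 {n : ℕ} (α : Fin n → ℤ) : L2T n := (char_memLp α 2).toLp (char α)

def hardyT (n : ℕ) : Submodule ℂ (L2T n) :=
  (Submodule.span ℂ
    (charL2 '' {α : Fin n → ℤ | ∀ k : Fin n, 0 ≤ (∑ j ∈ Finset.Iic k, α j) + (k.val : ℤ)})).topologicalClosure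

def hardyD (n : ℕ) : Submodule ℂ (L2T n) :=
  (Submodule.span ℂ (charL2 '' {α : Fin n → ℤ | ∀ j, 0 ≤ α j})).topologicalClosure

instance hardyT.completeSpace (n : ℕ) : CompleteSpace (hardyT n) :=
  (Submodule.isClosed_topologicalClosure _).completeSpace_coe

instance hardyD.completeSpace (n : ℕ) : CompleteSpace (hardyD n) :=
  (Submodule.isClosed_topologicalClosure _).completeSpace_coe

def IsToeplitzOn {n : ℕ} (K : Submodule ℂ (L2T n)) (φ : Torus n → ℂ) (T : K →L[ℂ] K) : Prop :=
  ∀ f g : K,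
    (inner ℂ ((g : L2T n)) ((T f : L2T n)) : ℂ) =
      ∫ x, conj ((g : L2T n) x) * (φ x * (f : L2T n) x) ∂volume

def IsCoordMult {n : ℕ} (j : Fin n) (M : hardyT n →L[ℂ] hardyT n) : Prop :=
  ∀ f : hardyT n,
    ((M f : L2T n) : Torus n → ℂ) =ᵐ[volume]
      fun x => fourier 1 (x j) * ((f : L2T n) : Torus n → ℂ) x

def IsHankelT {n : ℕ} (φ : Torus n → ℂ) (H : hardyT n →L[ℂ] L2T n) : Prop :=
  (∀ f : hardyT n, H f ∈ (hardyT n)ᗮ) ∧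
    ∀ f : hardyT n, ∀ g : L2T n, g ∈ (hardyT n)ᗮ →
      (inner ℂ g (H f) : ℂ) = ∫ x, conj (g x) * (φ x * (f : L2T n) x) ∂volume

def IsAnalyticSymbolF {n : ℕ} (φ : Torus n → ℂ) : Prop :=
  ∀ α : Fin n → ℤ, (¬ ∀ k : Fin n, 0 ≤ ∑ j ∈ Finset.Iic k, α j) →
    ∫ x, φ x * char (-α) x ∂(volume : Measure (Torus n)) = 0

def IsInnerSymbolF {n : ℕ} (φ : Torus n → ℂ) : Prop :=
  IsAnalyticSymbolF φ ∧ ∀ᵐ x ∂(volume : Measure (Torus n)), ‖φ x‖ = 1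

def tauMap {n : ℕ} (x : Torus n) : Torus n := fun j => ∑ k ∈ Finset.Ici j, x k

def sigmaMap {n : ℕ} (x : Torus n) : Torus n :=
  fun j => if h : (j : ℕ) + 1 < n then x j - x ⟨(j : ℕ) + 1, h⟩ else x j

def jacF {n : ℕ} (x : Torus n) : ℂ := ∏ j : Fin n, fourier (j.val : ℤ) (x j)

def jacInvF {n : ℕ} (x : Torus n) : ℂ :=
  ∏ j : Fin n, fourier (if j.val = 0 then (0 : ℤ) else -1) (x j)


/-! ### Auxiliary lemmas -/

section Aux

lemma vol_eq_haar : (volume : Measure (AddCircle (1:ℝ))) = AddCircle.haarAddCircle := by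
  rw [AddCircle.volume_eq_smul_haarAddCircle]; simp

lemma integral_fourier_one (m : ℤ) :
    ∫ x : AddCircle (1:ℝ), fourier m x ∂volume = if m = 0 then 1 else 0 := by
  rw [vol_eq_haar]
  split_ifs with h
  · subst h
    have : ⇑(fourier (T := (1:ℝ)) 0) = (fun _ => 1 : AddCircle (1:ℝ) → ℂ) := by
      ext1; exact fourier_zero
    rw [this, integral_const]; simp
  · exact integral_eq_zero_of_add_right_eq_neg (fourier_add_half_inv_index h one_pos)

lemma char_add {n : ℕ} (α β : Fin n → ℤ) (x : Torus n) :
    char (α + β) x = char α x * char β x := by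
  simp only [char, ← Finset.prod_mul_distrib]
  exact Finset.prod_congr rfl fun j _ => by rw [Pi.add_apply, fourier_add]

lemma char_conj {n : ℕ} (α : Fin n → ℤ) (x : Torus n) :
    conj (char α x) = char (-α) x := by
  simp only [char, map_prod]
  exact Finset.prod_congr rfl fun j _ => by rw [Pi.neg_apply, fourier_neg]

lemma integral_char {n : ℕ} (α : Fin n → ℤ) :
    ∫ x : Torus n, char α x ∂volume = if α = 0 then 1 else 0 := by
  have : ∫ x : Torus n, char α x ∂volume = ∏ j, ∫ x : AddCircle (1:ℝ), fourier (α j) x := by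
    simpa [char] using MeasureTheory.integral_fintype_prod_volume_eq_prod
      (fun j (x : AddCircle (1:ℝ)) => (fourier (α j) x : ℂ))
  rw [this]
  simp_rw [integral_fourier_one]
  split_ifs with h
  · subst h; simp
  · obtain ⟨j, hj⟩ := Function.ne_iff.mp h
    exact Finset.prod_eq_zero (Finset.mem_univ j) (by simpa using hj)

lemma charL2_coeFn {n : ℕ} (α : Fin n → ℤ) :
    (charL2 α : Torus n → ℂ) =ᵐ[volume] char α :=
  MemLp.coeFn_toLp _

lemma inner_charL2 {n : ℕ} (α β : Fin n → ℤ) :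
    (inner ℂ (charL2 α) (charL2 β) : ℂ) = if α = β then 1 else 0 := by
  rw [MeasureTheory.L2.inner_def]
  have h1 : ∀ᵐ x ∂(volume : Measure (Torus n)),
      (inner ℂ ((charL2 α : Torus n → ℂ) x) ((charL2 β : Torus n → ℂ) x) : ℂ)
        = char (β - α) x := by
    filter_upwards [charL2_coeFn α, charL2_coeFn β] with x hx hy
    rw [hx, hy, RCLike.inner_apply, char_conj]
    rw [show β - α = -α + β by ring, char_add, mul_comm]
  rw [integral_congr_ae h1, integral_char]
  congr 1
  simp [sub_eq_zero, eq_comm]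

def Iset (n : ℕ) : Set (Fin n → ℤ) :=
  {α : Fin n → ℤ | ∀ k : Fin n, 0 ≤ (∑ j ∈ Finset.Iic k, α j) + (k.val : ℤ)}

lemma hardyT_def (n : ℕ) :
    hardyT n = (Submodule.span ℂ (charL2 '' Iset n)).topologicalClosure := rfl

lemma span_le_hardyT (n : ℕ) : Submodule.span ℂ (charL2 '' Iset n) ≤ hardyT n :=
  Submodule.le_topologicalClosure _

lemma charL2_mem_hardyT {n : ℕ} {α : Fin n → ℤ} (hα : α ∈ Iset n) :
    charL2 α ∈ hardyT n :=
  span_le_hardyT n (Submodule.subset_span ⟨α, hα, rfl⟩)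

/-- If `d` is orthogonal to all generating characters, it is orthogonal to `hardyT n`. -/
lemma inner_eq_zero_of_gen {n : ℕ} (d : L2T n)
    (hd : ∀ α ∈ Iset n, (inner ℂ d (charL2 α) : ℂ) = 0) :
    ∀ f ∈ hardyT n, (inner ℂ d f : ℂ) = 0 := by
  intro f hf
  have hle : hardyT n ≤ LinearMap.ker (innerSL ℂ d).toLinearMap := by
    rw [hardyT_def]
    refine Submodule.topologicalClosure_minimal _ ?_ (ContinuousLinearMap.isClosed_ker _)
    rw [Submodule.span_le]
    rintro - ⟨α, hα, rfl⟩
    exact hd α hα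
  exact hle hf

lemma charL2_orth {n : ℕ} {γ : Fin n → ℤ} (hγ : γ ∉ Iset n) :
    ∀ f ∈ hardyT n, (inner ℂ (charL2 γ) f : ℂ) = 0 := by
  refine inner_eq_zero_of_gen _ fun α hα => ?_
  rw [inner_charL2, if_neg]
  rintro rfl; exact hγ hα

/-- Two elements of `hardyT n` with the same inner products against all generating
characters are equal. -/
lemma hardyT_ext {n : ℕ} (x y : hardyT n)
    (h : ∀ α ∈ Iset n, (inner ℂ (charL2 α) ((x : L2T n)) : ℂ) = inner ℂ (charL2 α) ((y : L2T n))) :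
    x = y := by
  have hd : ∀ α ∈ Iset n, (inner ℂ ((x : L2T n) - y) (charL2 α) : ℂ) = 0 := by
    intro α hα
    have hconj := congrArg (starRingEnd ℂ) (h α hα)
    rw [inner_conj_symm, inner_conj_symm] at hconj
    rw [inner_sub_left, hconj, sub_self]
  have h0 : (inner ℂ ((x : L2T n) - y) ((x : L2T n) - y) : ℂ) = 0 := by
    rw [inner_sub_right]
    rw [inner_eq_zero_of_gen _ hd _ x.2, inner_eq_zero_of_gen _ hd _ y.2, sub_self]
  have := inner_self_eq_zero.mp h0
  exact Subtype.ext (sub_eq_zero.mp this)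

/-- Two continuous linear maps on `hardyT n` agreeing on the generating characters agree. -/
lemma hardyT_op_ext {n : ℕ} {E : Type*} [NormedAddCommGroup E] [NormedSpace ℂ E]
    (A B : hardyT n →L[ℂ] E)
    (h : ∀ (α : Fin n → ℤ) (hα : α ∈ Iset n),
      A ⟨charL2 α, charL2_mem_hardyT hα⟩ = B ⟨charL2 α, charL2_mem_hardyT hα⟩) :
    A = B := by
  ext x
  have hx : (x : L2T n) ∈ closure ((Submodule.span ℂ (charL2 '' Iset n)) : Set (L2T n)) := x.2
  have key : ∀ w, ∀ hw : w ∈ Submodule.span ℂ (charL2 '' Iset n),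
      A ⟨w, span_le_hardyT n hw⟩ = B ⟨w, span_le_hardyT n hw⟩ := by
    intro w hw
    induction hw using Submodule.span_induction with
    | mem w hw =>
        obtain ⟨α, hα, rfl⟩ := hw
        exact h α hα
    | zero => show A 0 = B 0; simp
    | add w₁ w₂ h₁ h₂ ih₁ ih₂ =>
        show A (⟨w₁, span_le_hardyT n h₁⟩ + ⟨w₂, span_le_hardyT n h₂⟩)
          = B (⟨w₁, span_le_hardyT n h₁⟩ + ⟨w₂, span_le_hardyT n h₂⟩)
        rw [map_add, map_add, ih₁, ih₂]
    | smul c w hw ih =>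
        show A (c • (⟨w, span_le_hardyT n hw⟩ : hardyT n))
          = B (c • (⟨w, span_le_hardyT n hw⟩ : hardyT n))
        rw [A.map_smul, B.map_smul, ih]
  have hsub : x ∈ closure
      (Subtype.val ⁻¹' ((Submodule.span ℂ (charL2 '' Iset n)) : Set (L2T n)) :
        Set (hardyT n)) := by
    rw [closure_subtype, Set.image_preimage_eq_inter_range, Subtype.range_coe,
      Set.inter_eq_self_of_subset_left (span_le_hardyT n)]
    exact hx
  have hclosed : IsClosed {y : hardyT n | A y = B y} :=
    isClosed_eq A.continuous B.continuous
  refine hclosed.closure_subset_iff.mpr ?_ hsub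
  intro v hv
  exact key ↑v hv

def eT {n : ℕ} (j : Fin n) : Fin n → ℤ := Pi.single j 1

def Fc {n : ℕ} (φ : Torus n → ℂ) (γ : Fin n → ℤ) : ℂ :=
  ∫ x, φ x * char (-γ) x ∂(volume : Measure (Torus n))

lemma isAnalytic_iff_Fc {n : ℕ} (φ : Torus n → ℂ) :
    IsAnalyticSymbolF φ ↔ ∀ γ : Fin n → ℤ,
      (¬ ∀ k : Fin n, 0 ≤ ∑ j ∈ Finset.Iic k, γ j) → Fc φ γ = 0 :=
  Iff.rfl

lemma char_single {n : ℕ} (j : Fin n) (x : Torus n) : char (eT j) x = fourier 1 (x j) := by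
  rw [char, Finset.prod_eq_single j
    (fun k _ hk => by rw [eT, Pi.single_eq_of_ne hk]; exact fourier_zero)
    (by simp)]
  rw [eT, Pi.single_eq_same]

lemma sum_Iic_single {n : ℕ} (j k : Fin n) :
    ∑ i ∈ Finset.Iic k, eT j i = if j ≤ k then 1 else 0 := by
  rw [eT, Finset.sum_pi_single']
  simp

section Main
variable {n : ℕ} {φ : LinfT n} {T : hardyT n →L[ℂ] hardyT n}

lemma toeplitz_inner (hT : IsToeplitzOn (hardyT n) (⇑φ) T)
    (f : hardyT n) (α β : Fin n → ℤ)
    (hf : (((f : L2T n)) : Torus n → ℂ) =ᵐ[volume] char α) (hβ : β ∈ Iset n) :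
    (inner ℂ (charL2 β) ((T f : L2T n)) : ℂ) = Fc (⇑φ) (β - α) := by
  rw [show (inner ℂ (charL2 β) ((T f : L2T n)) : ℂ) = _ from
    hT f ⟨charL2 β, charL2_mem_hardyT hβ⟩, Fc]
  refine integral_congr_ae ?_
  filter_upwards [charL2_coeFn β, hf] with x hx hfx
  show conj ((charL2 β : Torus n → ℂ) x) * (φ x * ((f : L2T n) : Torus n → ℂ) x) = _
  rw [hx, hfx, char_conj]
  have : char (-(β - α)) x = char α x * char (-β) x := by
    rw [show -(β - α) = α + -β by ring, char_add]
  rw [this]; ring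

lemma shift_inner {j : Fin n} {Mj : hardyT n →L[ℂ] hardyT n} (hMj : IsCoordMult j Mj)
    (h : hardyT n) (β : Fin n → ℤ) :
    (inner ℂ (charL2 β) ((Mj h : L2T n)) : ℂ) = inner ℂ (charL2 (β - eT j)) ((h : L2T n)) := by
  rw [MeasureTheory.L2.inner_def, MeasureTheory.L2.inner_def]
  refine integral_congr_ae ?_
  filter_upwards [charL2_coeFn β, charL2_coeFn (β - eT j), hMj h] with x h1 h2 h3
  rw [RCLike.inner_apply, RCLike.inner_apply, h1, h2, h3]
  rw [char_conj, char_conj]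
  have : char (-(β - eT j)) x = char (eT j) x * char (-β) x := by
    rw [show -(β - eT j) = eT j + -β by ring, char_add]
  rw [this, char_single]
  ring

/-- The coordinate multiplier applied to a character function: a.e. description. -/
lemma coordMult_char {j : Fin n} {Mj : hardyT n →L[ℂ] hardyT n} (hMj : IsCoordMult j Mj)
    {α : Fin n → ℤ} (hα : α ∈ Iset n) :
    (((Mj ⟨charL2 α, charL2_mem_hardyT hα⟩ : L2T n)) : Torus n → ℂ)
      =ᵐ[volume] char (α + eT j) := by
  filter_upwards [hMj ⟨charL2 α, charL2_mem_hardyT hα⟩, charL2_coeFn α] with x h1 h2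
  rw [h1]
  show fourier 1 (x j) * (charL2 α : Torus n → ℂ) x = _
  rw [h2, char_add, char_single]
  ring

end Main

lemma not_mem_Iset_sub_single {n : ℕ} {β : Fin n → ℤ} (hβ : β ∈ Iset n) {j : Fin n}
    (h : β - eT j ∉ Iset n) :
    ∃ k : Fin n, j ≤ k ∧ (∑ i ∈ Finset.Iic k, β i) + (k.val : ℤ) = 0 := by
  simp only [Iset, Set.mem_setOf_eq, not_forall, not_le] at h
  obtain ⟨k, hk⟩ := h
  have hsum : ∑ i ∈ Finset.Iic k, (β - eT j) i
      = (∑ i ∈ Finset.Iic k, β i) - (if j ≤ k then 1 else 0) := by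
    simp only [Pi.sub_apply]
    rw [Finset.sum_sub_distrib, sum_Iic_single]
  rw [hsum] at hk
  have hβk := hβ k
  by_cases hjk : j ≤ k
  · rw [if_pos hjk] at hk
    exact ⟨k, hjk, by omega⟩
  · rw [if_neg hjk] at hk
    omega

lemma notS_of {n : ℕ} {α β : Fin n → ℤ} (hα : α ∈ Iset n) (hβ : β ∈ Iset n) {j : Fin n}
    (hj : β - eT j ∉ Iset n) :
    ¬ ∀ k : Fin n, 0 ≤ ∑ i ∈ Finset.Iic k, (β - α - eT j) i := by
  obtain ⟨k, hjk, hk⟩ := not_mem_Iset_sub_single hβ hj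
  intro hall
  have h1 := hall k
  have h2 := hα k
  have hsum : ∑ i ∈ Finset.Iic k, (β - α - eT j) i
      = (∑ i ∈ Finset.Iic k, β i) - (∑ i ∈ Finset.Iic k, α i)
        - (if j ≤ k then 1 else 0) := by
    simp only [Pi.sub_apply]
    rw [Finset.sum_sub_distrib, Finset.sum_sub_distrib, sum_Iic_single]
  rw [hsum, if_pos hjk] at h1
  omega

lemma exists_decomp {n : ℕ} (γ : Fin n → ℤ)
    (hγ : ¬ ∀ k : Fin n, 0 ≤ ∑ i ∈ Finset.Iic k, γ i) :
    ∃ (j : Fin n) (α : Fin n → ℤ), α ∈ Iset n ∧ (α + eT j + γ) ∈ Iset n ∧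
      (α + eT j + γ) - eT j ∉ Iset n := by
  push_neg at hγ
  set s : Fin n → ℤ := fun k => ∑ i ∈ Finset.Iic k, γ i with hs
  have hbadne : (Finset.univ.filter (fun k : Fin n => s k < 0)).Nonempty := by
    obtain ⟨k, hk⟩ := hγ
    exact ⟨k, Finset.mem_filter.mpr ⟨Finset.mem_univ _, hk⟩⟩
  set k₀ : Fin n := (Finset.univ.filter (fun k : Fin n => s k < 0)).min' hbadne with hk₀
  have hk₀bad : s k₀ < 0 :=
    (Finset.mem_filter.mp ((Finset.univ.filter (fun k : Fin n => s k < 0)).min'_mem hbadne)).2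
  have hk₀min : ∀ k : Fin n, k < k₀ → 0 ≤ s k := by
    intro k hk
    by_contra hneg
    exact absurd (Finset.min'_le _ k
      (Finset.mem_filter.mpr ⟨Finset.mem_univ _, by omega⟩)) (not_le.mpr hk)
  set G : ℤ := ∑ i : Fin n, |γ i| with hG
  have habs : ∀ k : Fin n, |s k| ≤ G := by
    intro k
    calc |s k| ≤ ∑ i ∈ Finset.Iic k, |γ i| := Finset.abs_sum_le_sum_abs _ _
      _ ≤ G := Finset.sum_le_sum_of_subset_of_nonneg (Finset.subset_univ _)
          (fun i _ _ => abs_nonneg _)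
  have hG0 : 0 ≤ G := le_trans (abs_nonneg _) (habs k₀)
  set Tb : ℤ := 2 * G + 1 with hTb
  set α : Fin n → ℤ := fun k =>
    if k < k₀ then 0 else if k = k₀ then -(k₀.val : ℤ) - s k₀ - 1 else Tb with hα
  -- partial sums of α
  have hSlt : ∀ k : Fin n, k < k₀ → ∑ i ∈ Finset.Iic k, α i = 0 := by
    intro k hk
    refine Finset.sum_eq_zero fun i hi => ?_
    have : i < k₀ := lt_of_le_of_lt (Finset.mem_Iic.mp hi) hk
    simp [hα, this]
  have hSk₀ : ∑ i ∈ Finset.Iic k₀, α i = -(k₀.val : ℤ) - s k₀ - 1 := by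
    rw [← Finset.Iio_insert, Finset.sum_insert (by simp)]
    have : ∑ i ∈ Finset.Iio k₀, α i = 0 :=
      Finset.sum_eq_zero fun i hi => by simp [hα, Finset.mem_Iio.mp hi]
    rw [this]
    simp [hα]
  have hSgt : ∀ k : Fin n, k₀ < k → ∃ c : ℤ, 1 ≤ c ∧
      ∑ i ∈ Finset.Iic k, α i = -(k₀.val : ℤ) - s k₀ - 1 + c * Tb := by
    intro k hk
    have hsplit : Finset.Iic k₀ ∪ Finset.Ioc k₀ k = Finset.Iic k := by
      ext i
      simp only [Finset.mem_union, Finset.mem_Iic, Finset.mem_Ioc, Fin.le_def, Fin.lt_def]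
      have := hk
      rw [Fin.lt_def] at this
      omega
    have hdisj : Disjoint (Finset.Iic k₀) (Finset.Ioc k₀ k) := by
      rw [Finset.disjoint_left]
      intro i hi hi'
      exact absurd (Finset.mem_Ioc.mp hi').1 (not_lt.mpr (Finset.mem_Iic.mp hi))
    have hIoc : ∑ i ∈ Finset.Ioc k₀ k, α i = ((Finset.Ioc k₀ k).card : ℤ) * Tb := by
      rw [Finset.sum_congr rfl (fun i hi => ?_), Finset.sum_const, nsmul_eq_mul]
      have h1 := (Finset.mem_Ioc.mp hi).1
      simp [hα, not_lt.mpr h1.le, h1.ne']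
    refine ⟨(Finset.Ioc k₀ k).card, ?_, ?_⟩
    · have : k ∈ Finset.Ioc k₀ k := Finset.mem_Ioc.mpr ⟨hk, le_refl _⟩
      have := Finset.card_pos.mpr ⟨k, this⟩
      exact_mod_cast this
    · rw [← hsplit, Finset.sum_union hdisj, hSk₀, hIoc]
  refine ⟨k₀, α, ?_, ?_, ?_⟩
  · -- α ∈ Iset n
    intro k
    rcases lt_trichotomy k k₀ with h | h | h
    · rw [hSlt k h]; positivity
    · subst h; rw [hSk₀]; omega
    · obtain ⟨c, hc1, hc2⟩ := hSgt k h
      rw [hc2]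
      have h1 : -G ≤ s k₀ ∧ s k₀ ≤ G := abs_le.mp (habs k₀)
      have h2 : Tb ≤ c * Tb := le_mul_of_one_le_left (by omega) hc1
      have h3 : (k₀ : ℕ) ≤ (k : ℕ) := le_of_lt h
      omega
  · -- α + eT k₀ + γ ∈ Iset n
    intro k
    have hsum : ∑ i ∈ Finset.Iic k, (α + eT k₀ + γ) i
        = (∑ i ∈ Finset.Iic k, α i) + (if k₀ ≤ k then 1 else 0) + s k := by
      simp only [Pi.add_apply]
      rw [Finset.sum_add_distrib, Finset.sum_add_distrib, sum_Iic_single]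
    rw [hsum]
    rcases lt_trichotomy k k₀ with h | h | h
    · rw [hSlt k h, if_neg (not_le.mpr h)]
      have := hk₀min k h
      omega
    · subst h; rw [hSk₀, if_pos le_rfl]; omega
    · obtain ⟨c, hc1, hc2⟩ := hSgt k h
      rw [hc2, if_pos h.le]
      have h1 : -G ≤ s k₀ ∧ s k₀ ≤ G := abs_le.mp (habs k₀)
      have h1' : -G ≤ s k ∧ s k ≤ G := abs_le.mp (habs k)
      have h2 : Tb ≤ c * Tb := le_mul_of_one_le_left (by omega) hc1
      have h3 : (k₀ : ℕ) ≤ (k : ℕ) := le_of_lt h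
      omega
  · -- (α + eT k₀ + γ) - eT k₀ ∉ Iset n
    intro hmem
    have hcontra := hmem k₀
    have hsum : ∑ i ∈ Finset.Iic k₀, ((α + eT k₀ + γ) - eT k₀) i
        = (∑ i ∈ Finset.Iic k₀, α i) + s k₀ := by
      simp only [Pi.add_apply, Pi.sub_apply]
      have : ∀ i, α i + eT k₀ i + γ i - eT k₀ i = α i + γ i := fun i => by ring
      rw [Finset.sum_congr rfl (fun i _ => this i), Finset.sum_add_distrib]
    rw [hsum, hSk₀] at hcontra
    omega

/-- `T_{φ,△ₙ}` is analytic iff it commutes with every `𝓜_{z_j}` iff the range of each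
`𝓜_{z_j}` is invariant under `T_{φ,△ₙ}`. -/
theorem stmt17 {n : ℕ} (hn : 2 ≤ n) (φ : LinfT n)
    (T : hardyT n →L[ℂ] hardyT n) (hT : IsToeplitzOn (hardyT n) (⇑φ) T)
    (M : Fin n → (hardyT n →L[ℂ] hardyT n)) (hM : ∀ j, IsCoordMult j (M j)) :
    (IsAnalyticSymbolF (⇑φ) ↔ ∀ j : Fin n, T * M j = M j * T) ∧
    (IsAnalyticSymbolF (⇑φ) ↔
      ∀ j : Fin n, ∀ f : hardyT n, T (M j f) ∈ Set.range (M j)) := by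
  classical
  -- (i) → (ii)
  have himp1 : IsAnalyticSymbolF (⇑φ) → ∀ j : Fin n, T * M j = M j * T := by
    intro hA j
    refine hardyT_op_ext (T * M j) (M j * T) fun α hα => ?_
    refine hardyT_ext _ _ fun β hβ => ?_
    have hL : (inner ℂ (charL2 β)
        (((T * M j) ⟨charL2 α, charL2_mem_hardyT hα⟩ : L2T n)) : ℂ)
          = Fc (⇑φ) (β - (α + eT j)) :=
      toeplitz_inner hT ((M j) ⟨charL2 α, charL2_mem_hardyT hα⟩) (α + eT j) β
        (coordMult_char (hM j) hα) hβ
    have hR : (inner ℂ (charL2 β)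
        (((M j * T) ⟨charL2 α, charL2_mem_hardyT hα⟩ : L2T n)) : ℂ)
          = inner ℂ (charL2 (β - eT j)) ((T ⟨charL2 α, charL2_mem_hardyT hα⟩ : L2T n)) :=
      shift_inner (hM j) (T ⟨charL2 α, charL2_mem_hardyT hα⟩) β
    rw [hL, hR]
    by_cases hmem : β - eT j ∈ Iset n
    · rw [toeplitz_inner hT ⟨charL2 α, charL2_mem_hardyT hα⟩ α (β - eT j)
        (charL2_coeFn α) hmem]
      congr 1
      ring
    · rw [charL2_orth hmem _ (T ⟨charL2 α, charL2_mem_hardyT hα⟩).2]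
      have hnot := notS_of hα hβ hmem
      have := (isAnalytic_iff_Fc (⇑φ)).mp hA (β - α - eT j) hnot
      rw [show β - (α + eT j) = β - α - eT j by ring, this]
  -- (ii) → (iii)
  have himp2 : (∀ j : Fin n, T * M j = M j * T) →
      ∀ j : Fin n, ∀ f : hardyT n, T (M j f) ∈ Set.range (M j) := by
    intro hc j f
    refine ⟨T f, ?_⟩
    have : (M j * T) f = (T * M j) f := by rw [hc j]
    exact this
  -- (iii) → (i)
  have himp3 : (∀ j : Fin n, ∀ f : hardyT n, T (M j f) ∈ Set.range (M j)) →
      IsAnalyticSymbolF (⇑φ) := by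
    intro hinv
    rw [isAnalytic_iff_Fc]
    intro γ hγ
    obtain ⟨j, α, hα, hβ, hnot⟩ := exists_decomp γ hγ
    obtain ⟨g, hg⟩ := hinv j ⟨charL2 α, charL2_mem_hardyT hα⟩
    have hL : (inner ℂ (charL2 (α + eT j + γ))
        ((T ((M j) ⟨charL2 α, charL2_mem_hardyT hα⟩) : L2T n)) : ℂ)
          = Fc (⇑φ) ((α + eT j + γ) - (α + eT j)) :=
      toeplitz_inner hT ((M j) ⟨charL2 α, charL2_mem_hardyT hα⟩) (α + eT j)
        (α + eT j + γ) (coordMult_char (hM j) hα) hβ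
    rw [show (α + eT j + γ) - (α + eT j) = γ by ring] at hL
    rw [← hL, ← hg, shift_inner (hM j) g (α + eT j + γ),
      charL2_orth hnot _ g.2]
  exact ⟨⟨himp1, fun h => himp3 (himp2 h)⟩, ⟨fun h => himp2 (himp1 h), himp3⟩⟩
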